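/- Let n ≥ 2, let C, D ∈ ℝ^{n×n} be symmetric, and fix V ∈ ℝ^{n×(n−1)} with Vᵀ·1 = 0 and Vᵀ V = I_{n−1}; write Ĉ := Vᵀ C V and D̂ := Vᵀ D V. Define OGW_lb(C,D) := (1/n²)·[ ‖C‖_F² + ‖D‖_F² − 2·Σ_{i=1}^{n−1} λᵢ↓(Ĉ)·λᵢ↓(D̂) − (4/n)·‖Vᵀ C 1‖·‖Vᵀ D 1‖ − (2/n²)·(1ᵀ C 1)(1ᵀ D 1) ]. Then OGW_lb(C,D) = (1/n²)·[ Σ_{i=1}^{n−1} (λᵢ↓(Ĉ) − λᵢ↓(D̂))² + (2/n)·(‖Vᵀ C 1‖ − ‖Vᵀ D 1‖)² + (1/n²)·(1ᵀ C 1 − 1ᵀ D 1)² ]. In other words, OGW_lb equals the squared Euclidean distance between the feature vectors (λ₁↓(Ĉ)/n, …, λ_{n−1}↓(Ĉ)/n, √2·‖Vᵀ C 1‖/(n√n), 1ᵀ C 1/n²) of the two matrices. -/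

import Mathlib

open Matrix BigOperators

noncomputable section

/-- Squared Frobenius norm of a real matrix. -/
def frobSq {m n : ℕ} (A : Matrix (Fin m) (Fin n) ℝ) : ℝ := ∑ i, ∑ j, (A i j) ^ 2

/-- Euclidean norm of a real vector. -/
def vnorm {n : ℕ} (v : Fin n → ℝ) : ℝ := Real.sqrt (∑ i, (v i) ^ 2)

/-- Eigenvalues of a real symmetric (Hermitian) matrix, listed in descending order. -/
def eigDesc {n : ℕ} {A : Matrix (Fin n) (Fin n) ℝ} (hA : A.IsHermitian) : Fin n → ℝ :=
  fun i => (hA.eigenvalues ∘ Tuple.sort hA.eigenvalues) i.rev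

/-- Conjugating a real symmetric (Hermitian) matrix preserves symmetry. -/
theorem conjHerm {n m : ℕ} (V : Matrix (Fin n) (Fin m) ℝ) {C : Matrix (Fin n) (Fin n) ℝ}
    (hC : C.IsHermitian) : (Vᵀ * C * V).IsHermitian := by
  have h := Matrix.isHermitian_mul_mul_conjTranspose Vᵀ hC
  simpa using h


/-- The closed-form lower bound `OGW_lb` of the orthogonal Gromov-Wasserstein discrepancy. -/
def OGWlb {n : ℕ} (V : Matrix (Fin n) (Fin (n - 1)) ℝ)
    (C D : Matrix (Fin n) (Fin n) ℝ) (hC : C.IsHermitian) (hD : D.IsHermitian) : ℝ :=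
  (1 / (n : ℝ) ^ 2) * (frobSq C + frobSq D
    - 2 * ∑ i, eigDesc (conjHerm V hC) i * eigDesc (conjHerm V hD) i
    - (4 / (n : ℝ)) * vnorm ((Vᵀ * C) *ᵥ (fun _ => (1 : ℝ)))
        * vnorm ((Vᵀ * D) *ᵥ (fun _ => (1 : ℝ)))
    - (2 / (n : ℝ) ^ 2) * ((∑ i, ∑ j, C i j) * (∑ i, ∑ j, D i j)))

/-- Squared Frobenius norm as trace of the square, for symmetric matrices. -/
lemma frobSq_eq_trace_sq {k : ℕ} {M : Matrix (Fin k) (Fin k) ℝ} (hM : M.IsHermitian) :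
    frobSq M = (M * M).trace := by
  have h : ∀ i j, M j i = M i j := fun i j => by
    conv_lhs => rw [← hM.eq]
    simp [conjTranspose_apply]
  simp only [frobSq, trace, Matrix.diag, Matrix.mul_apply, sq]
  rw [Finset.sum_comm]
  exact Finset.sum_congr rfl fun i _ => Finset.sum_congr rfl fun j _ => by rw [h i j]

/-- Trace of the square of a symmetric matrix is the sum of squared eigenvalues. -/
lemma trace_sq_eq_sum_eig_sq {k : ℕ} {A : Matrix (Fin k) (Fin k) ℝ} (hA : A.IsHermitian) :
    (A * A).trace = ∑ i, hA.eigenvalues i ^ 2 := by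
  set U : Matrix (Fin k) (Fin k) ℝ := (hA.eigenvectorUnitary : Matrix (Fin k) (Fin k) ℝ)
  have hU : (star U) * U = 1 := Unitary.coe_star_mul_self _
  have hsp : A = U * diagonal (RCLike.ofReal ∘ hA.eigenvalues) * star U := hA.spectral_theorem
  set D : Matrix (Fin k) (Fin k) ℝ := diagonal (RCLike.ofReal ∘ hA.eigenvalues)
  have key : A * A = U * (D * D) * star U := by
    conv_lhs => rw [hsp]
    have : (U * D * star U) * (U * D * star U) = U * (D * (star U * U) * D) * star U := by
      noncomm_ring
    rw [this, hU]
    noncomm_ring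
  rw [key, Matrix.trace_mul_cycle, ← Matrix.mul_assoc, hU, Matrix.one_mul]
  simp [D, diagonal_mul_diagonal, trace_diagonal, sq]

/-- Reordering eigenvalues in descending order does not change sums of functions of them. -/
lemma sum_eigDesc {k : ℕ} {A : Matrix (Fin k) (Fin k) ℝ} (hA : A.IsHermitian)
    (g : ℝ → ℝ) : ∑ i, g (eigDesc hA i) = ∑ i, g (hA.eigenvalues i) := by
  have := Equiv.sum_comp (Fin.revPerm.trans (Tuple.sort hA.eigenvalues))
    (fun i => g (hA.eigenvalues i))
  simpa [eigDesc] using this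

/-- Completing `V` with the normalized all-ones column resolves the identity. -/
lemma resolution {n : ℕ} (hn : 2 ≤ n) (V : Matrix (Fin n) (Fin (n - 1)) ℝ)
    (hV1 : Vᵀ *ᵥ (fun _ => (1 : ℝ)) = 0) (hV2 : Vᵀ * V = 1) :
    V * Vᵀ + (Matrix.of fun _ _ => (n : ℝ)⁻¹ : Matrix (Fin n) (Fin 1) ℝ)
      * (Matrix.of fun _ _ => (1 : ℝ) : Matrix (Fin 1) (Fin n) ℝ) = 1 := by
  set u : Matrix (Fin n) (Fin 1) ℝ := Matrix.of fun _ _ => (n : ℝ)⁻¹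
  set w : Matrix (Fin 1) (Fin n) ℝ := Matrix.of fun _ _ => (1 : ℝ)
  have hn0 : (n : ℝ) ≠ 0 := by positivity
  have hsum : ∀ j, ∑ x, V x j = 0 := fun j => by
    have := congrFun hV1 j
    simpa [mulVec, dotProduct] using this
  have h1 : fromRows Vᵀ w * fromCols V u = 1 := by
    rw [fromRows_mul_fromCols]
    have e1 : Vᵀ * u = 0 := by
      ext i j
      simp [u, Matrix.mul_apply, ← Finset.sum_mul, hsum i]
    have e2 : w * V = 0 := by
      ext i j
      simp [w, Matrix.mul_apply, hsum j]
    have e3 : w * u = 1 := by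
      ext i j
      simp [w, u, Matrix.mul_apply, Finset.sum_const, Fin.fin_one_eq_zero i,
        Fin.fin_one_eq_zero j, Matrix.one_apply, hn0]
    rw [hV2, e1, e2, e3, fromBlocks_one]
  have e : Fin (n - 1) ⊕ Fin 1 ≃ Fin n := finSumFinEquiv.trans (finCongr (by omega))
  have h2 : fromCols V u * fromRows Vᵀ w = 1 :=
    (Matrix.mul_eq_one_comm_of_equiv e).mp h1
  rwa [fromCols_mul_fromRows] at h2

/-- Decomposition of the squared Frobenius norm along the orthogonal splitting. -/
lemma frob_decomp {n : ℕ} (hn : 2 ≤ n) (V : Matrix (Fin n) (Fin (n - 1)) ℝ)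
    (hV1 : Vᵀ *ᵥ (fun _ => (1 : ℝ)) = 0) (hV2 : Vᵀ * V = 1)
    {C : Matrix (Fin n) (Fin n) ℝ} (hC : C.IsHermitian) :
    frobSq C = ((Vᵀ * C * V) * (Vᵀ * C * V)).trace
      + (2 / (n : ℝ)) * (∑ i, ((Vᵀ * C) *ᵥ (fun _ => (1 : ℝ))) i ^ 2)
      + (1 / (n : ℝ) ^ 2) * (∑ i, ∑ j, C i j) ^ 2 := by
  have hn0 : (n : ℝ) ≠ 0 := by positivity
  have hCs : ∀ i j, C j i = C i j := fun i j => by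
    conv_lhs => rw [← hC.eq]
    simp [conjTranspose_apply]
  set u : Matrix (Fin n) (Fin 1) ℝ := Matrix.of fun _ _ => (n : ℝ)⁻¹ with hu
  set w : Matrix (Fin 1) (Fin n) ℝ := Matrix.of fun _ _ => (1 : ℝ) with hw
  set r : Fin (n - 1) → ℝ := (Vᵀ * C) *ᵥ (fun _ => (1 : ℝ)) with hr
  set s : ℝ := ∑ i, ∑ j, C i j with hs
  have hres : V * Vᵀ + u * w = 1 := resolution hn V hV1 hV2
  have hrow : w * C * V = Matrix.of fun _ j => r j := by
    ext i j
    simp only [Matrix.mul_apply, Matrix.of_apply, hw, one_mul, hr, mulVec, dotProduct,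
      transpose_apply, mul_one]
    rw [Finset.sum_comm]
    refine Finset.sum_congr rfl fun x _ => ?_
    rw [Finset.sum_mul]
    refine Finset.sum_congr rfl fun k _ => ?_
    rw [hCs k x]; ring
  have hcol : Vᵀ * C * u = Matrix.of fun j _ => (n : ℝ)⁻¹ * r j := by
    ext j i
    simp only [Matrix.mul_apply, Matrix.of_apply, hu, hr, mulVec, dotProduct, mul_one]
    rw [Finset.mul_sum]
    exact Finset.sum_congr rfl fun x _ => mul_comm _ _
  have hscal : w * C * u = Matrix.of fun _ _ => (n : ℝ)⁻¹ * s := by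
    ext i j
    simp only [Matrix.mul_apply, Matrix.of_apply, hw, hu, one_mul]
    have h2 : s = ∑ x : Fin n, ∑ k : Fin n, C k x := Finset.sum_comm
    rw [h2, Finset.mul_sum]
    exact Finset.sum_congr rfl fun x _ => mul_comm _ _
  have expand : C * C = C * (V * Vᵀ) * (C * (V * Vᵀ)) + C * (V * Vᵀ) * (C * (u * w))
      + C * (u * w) * (C * (V * Vᵀ)) + C * (u * w) * (C * (u * w)) := by
    have : C * C = (C * (V * Vᵀ + u * w)) * (C * (V * Vᵀ + u * w)) := by
      rw [hres, Matrix.mul_one]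
    rw [this]; noncomm_ring
  rw [frobSq_eq_trace_sq hC, expand, Matrix.trace_add, Matrix.trace_add, Matrix.trace_add]
  have T1 : (C * (V * Vᵀ) * (C * (V * Vᵀ))).trace = ((Vᵀ * C * V) * (Vᵀ * C * V)).trace := by
    rw [show C * (V * Vᵀ) * (C * (V * Vᵀ)) = (C * V * (Vᵀ * C * V)) * Vᵀ by
      simp only [Matrix.mul_assoc], Matrix.trace_mul_comm]
    simp only [Matrix.mul_assoc]
  have T2 : (C * (V * Vᵀ) * (C * (u * w))).trace = (n : ℝ)⁻¹ * ∑ i, r i ^ 2 := by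
    rw [show C * (V * Vᵀ) * (C * (u * w)) = (C * V * ((Vᵀ * C * u))) * w by
      simp only [Matrix.mul_assoc], Matrix.trace_mul_comm,
      show w * (C * V * (Vᵀ * C * u)) = (w * C * V) * (Vᵀ * C * u) by
        simp only [Matrix.mul_assoc], hrow, hcol]
    simp [Matrix.trace, Matrix.diag, Matrix.mul_apply, Finset.mul_sum, sq]
    exact Finset.sum_congr rfl fun x _ => by ring
  have T3 : (C * (u * w) * (C * (V * Vᵀ))).trace = (n : ℝ)⁻¹ * ∑ i, r i ^ 2 := by
    rw [show C * (u * w) * (C * (V * Vᵀ)) = (C * u * ((w * C * V))) * Vᵀ by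
      simp only [Matrix.mul_assoc], Matrix.trace_mul_comm,
      show Vᵀ * (C * u * (w * C * V)) = (Vᵀ * C * u) * (w * C * V) by
        simp only [Matrix.mul_assoc], hcol, hrow]
    simp [Matrix.trace, Matrix.diag, Matrix.mul_apply, Finset.mul_sum, sq]
    exact Finset.sum_congr rfl fun x _ => by ring
  have T4 : (C * (u * w) * (C * (u * w))).trace = ((n : ℝ)⁻¹ * s) ^ 2 := by
    rw [show C * (u * w) * (C * (u * w)) = (C * u * ((w * C * u))) * w by
      simp only [Matrix.mul_assoc], Matrix.trace_mul_comm,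
      show w * (C * u * (w * C * u)) = (w * C * u) * (w * C * u) by
        simp only [Matrix.mul_assoc], hscal]
    simp [Matrix.trace, Matrix.diag, Matrix.mul_apply, sq]
  rw [T1, T2, T3, T4]
  field_simp
  ring

/-- The square of `vnorm` is the sum of squares. -/
lemma vnorm_sq {k : ℕ} (v : Fin k → ℝ) : vnorm v ^ 2 = ∑ i, v i ^ 2 :=
  Real.sq_sqrt (Finset.sum_nonneg fun i _ => sq_nonneg _)

/-- `OGW_lb` equals the squared Euclidean distance between spectral feature vectors. -/
theorem OGWlb_as_feature_distance (n : ℕ) (hn : 2 ≤ n)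
    (C D : Matrix (Fin n) (Fin n) ℝ) (hC : C.IsHermitian) (hD : D.IsHermitian)
    (V : Matrix (Fin n) (Fin (n - 1)) ℝ)
    (hV1 : Vᵀ *ᵥ (fun _ => (1 : ℝ)) = 0) (hV2 : Vᵀ * V = 1) :
    OGWlb V C D hC hD
      = (1 / (n : ℝ) ^ 2) * (
          (∑ i, (eigDesc (conjHerm V hC) i - eigDesc (conjHerm V hD) i) ^ 2)
          + (2 / (n : ℝ)) * (vnorm ((Vᵀ * C) *ᵥ (fun _ => (1 : ℝ)))
              - vnorm ((Vᵀ * D) *ᵥ (fun _ => (1 : ℝ)))) ^ 2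
          + (1 / (n : ℝ) ^ 2) * ((∑ i, ∑ j, C i j) - (∑ i, ∑ j, D i j)) ^ 2) := by
  have hFC := frob_decomp hn V hV1 hV2 hC
  have hFD := frob_decomp hn V hV1 hV2 hD
  have hTC : ((Vᵀ * C * V) * (Vᵀ * C * V)).trace = ∑ i, eigDesc (conjHerm V hC) i ^ 2 := by
    rw [trace_sq_eq_sum_eig_sq (conjHerm V hC), ← sum_eigDesc (conjHerm V hC) (fun x => x ^ 2)]
  have hTD : ((Vᵀ * D * V) * (Vᵀ * D * V)).trace = ∑ i, eigDesc (conjHerm V hD) i ^ 2 := by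
    rw [trace_sq_eq_sum_eig_sq (conjHerm V hD), ← sum_eigDesc (conjHerm V hD) (fun x => x ^ 2)]
  have hNC : ∑ i, ((Vᵀ * C) *ᵥ (fun _ => (1 : ℝ))) i ^ 2
      = vnorm ((Vᵀ * C) *ᵥ (fun _ => (1 : ℝ))) ^ 2 := (vnorm_sq _).symm
  have hND : ∑ i, ((Vᵀ * D) *ᵥ (fun _ => (1 : ℝ))) i ^ 2
      = vnorm ((Vᵀ * D) *ᵥ (fun _ => (1 : ℝ))) ^ 2 := (vnorm_sq _).symm
  have hdiff : ∑ i, (eigDesc (conjHerm V hC) i - eigDesc (conjHerm V hD) i) ^ 2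
      = ∑ i, eigDesc (conjHerm V hC) i ^ 2 + ∑ i, eigDesc (conjHerm V hD) i ^ 2
        - 2 * ∑ i, eigDesc (conjHerm V hC) i * eigDesc (conjHerm V hD) i := by
    rw [Finset.mul_sum, ← Finset.sum_add_distrib, ← Finset.sum_sub_distrib]
    exact Finset.sum_congr rfl fun i _ => by ring
  rw [OGWlb, hFC, hFD, hTC, hTD, hNC, hND, hdiff]
  ring

end
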